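/- Let U₁, U₂, U₃ be subspaces of F_q^d and V₁', V₂', V₃' subspaces with V_k' ⊆ U_k. Suppose there exist decoders as in the LCBC problem with K = 3 (User k has Xᵀ-projections onto V_k' and must recover projections onto U_k from the broadcast S and its side information), and the data X ∈ F_q^{d×L} is i.i.d. uniform. Then H(S)/L ≥ rk(U₁) − rk(V₁') + rk([U₁,U₂]) − rk([U₁,V₂']) + rk([U₁,U₂,U₃]) − rk([U₁,U₂,V₃']), where ranks are dimensions of subspace sums and H is in q-ary units. -/

import Mathlib

open scoped BigOperators
open Matrix

/-- Probability that the random variable `X` takes the value `a`. -/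
noncomputable def pOf {Ω α : Type*} [Fintype Ω] [DecidableEq α]
    (p : Ω → ℝ) (X : Ω → α) (a : α) : ℝ :=
  ∑ ω ∈ Finset.univ.filter (fun ω => X ω = a), p ω

/-- Shannon entropy (natural units) of a finitely-valued random variable. -/
noncomputable def Hent {Ω α : Type*} [Fintype Ω] [Fintype α] [DecidableEq α]
    (p : Ω → ℝ) (X : Ω → α) : ℝ :=
  ∑ a : α, Real.negMulLog (pOf p X a)

section LcbcAux

variable {F : Type*} [Field F] [Fintype F] [DecidableEq F]

lemma lcbc_natCard_eq {M N : Type*} [AddCommGroup M] [Module F M] [AddCommGroup N] [Module F N]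
    (f : M →ₗ[F] N) :
    Nat.card M = Nat.card (LinearMap.range f) * Nat.card (LinearMap.ker f) := by
  rw [Submodule.card_eq_card_quotient_mul_card (LinearMap.ker f),
    Nat.card_congr f.quotKerEquivRange.toEquiv]
  exact Nat.mul_comm _ _

lemma lcbc_natCard_submodule {V : Type*} [AddCommGroup V] [Module F V] [Finite V]
    (S : Submodule F V) :
    Nat.card S = Fintype.card F ^ Module.finrank F S := by
  letI : Fintype S := Fintype.ofFinite S
  rw [Nat.card_eq_fintype_card]
  exact Module.card_eq_pow_finrank

variable {d L : ℕ}

def lcbcPsi {n : Type*} [Fintype n] (M : Matrix (Fin d) n F) :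
    Matrix (Fin d) (Fin L) F →ₗ[F] Matrix (Fin L) n F where
  toFun X := Xᵀ * M
  map_add' X Y := by rw [Matrix.transpose_add, Matrix.add_mul]
  map_smul' c X := by rw [Matrix.transpose_smul, Matrix.smul_mul]; rfl

@[simp] lemma lcbcPsi_apply {n : Type*} [Fintype n] (M : Matrix (Fin d) n F)
    (X : Matrix (Fin d) (Fin L) F) : lcbcPsi M X = Xᵀ * M := rfl

lemma lcbc_natCard_ker_mulVecLin {n : Type*} [Fintype n] (M : Matrix (Fin d) n F) :
    Nat.card (LinearMap.ker Mᵀ.mulVecLin) = Fintype.card F ^ (d - M.rank) := by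
  have h := lcbc_natCard_eq (F := F) Mᵀ.mulVecLin
  have hdom : Nat.card (Fin d → F) = Fintype.card F ^ d := by
    rw [Nat.card_fun]; simp [Nat.card_eq_fintype_card]
  have hrange : Nat.card (LinearMap.range Mᵀ.mulVecLin) = Fintype.card F ^ M.rank := by
    rw [lcbc_natCard_submodule]
    congr 1
    exact (Matrix.rank_transpose M) ▸ rfl
  have hle : M.rank ≤ d := by
    simpa using Matrix.rank_le_card_height M
  have key : Fintype.card F ^ M.rank * Nat.card (LinearMap.ker Mᵀ.mulVecLin)
      = Fintype.card F ^ M.rank * Fintype.card F ^ (d - M.rank) := by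
    rw [← pow_add, Nat.add_sub_cancel' hle, ← hdom, h, hrange]
  exact Nat.eq_of_mul_eq_mul_left (pow_pos Fintype.card_pos _) key

lemma lcbc_mem_ker_psi_iff {n : Type*} [Fintype n] (M : Matrix (Fin d) n F)
    (X : Matrix (Fin d) (Fin L) F) :
    X ∈ LinearMap.ker (lcbcPsi (L := L) M) ↔
      ∀ i, (fun k => X k i) ∈ LinearMap.ker Mᵀ.mulVecLin := by
  simp only [LinearMap.mem_ker, lcbcPsi_apply, Matrix.mulVecLin_apply]
  constructor
  · intro h i
    funext j
    have := congrFun (congrFun h i) j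
    simpa [Matrix.mul_apply, Matrix.mulVec, dotProduct, mul_comm] using this
  · intro h
    ext i j
    have := congrFun (h i) j
    simpa [Matrix.mul_apply, Matrix.mulVec, dotProduct, mul_comm] using this

def lcbcKerEquiv {n : Type*} [Fintype n] (M : Matrix (Fin d) n F) :
    LinearMap.ker (lcbcPsi (L := L) M) ≃ (Fin L → LinearMap.ker Mᵀ.mulVecLin) where
  toFun X i := ⟨fun k => X.1 k i, (lcbc_mem_ker_psi_iff M X.1).mp X.2 i⟩
  invFun f := ⟨fun k i => (f i).1 k, (lcbc_mem_ker_psi_iff M _).mpr fun i => (f i).2⟩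
  left_inv X := rfl
  right_inv f := rfl

lemma lcbc_natCard_ker_psi {n : Type*} [Fintype n] (M : Matrix (Fin d) n F) :
    Nat.card (LinearMap.ker (lcbcPsi (L := L) M)) = Fintype.card F ^ (L * (d - M.rank)) := by
  rw [Nat.card_congr (lcbcKerEquiv M), Nat.card_fun, lcbc_natCard_ker_mulVecLin,
    Nat.card_eq_fintype_card, Fintype.card_fin, ← pow_mul, Nat.mul_comm]

lemma lcbc_card_matrix :
    Fintype.card (Matrix (Fin d) (Fin L) F) = Fintype.card F ^ (d * L) := by
  rw [← Nat.card_eq_fintype_card,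
    Nat.card_congr (Matrix.of (m := Fin d) (n := Fin L) (α := F)).symm,
    Nat.card_fun, Nat.card_fun, Nat.card_eq_fintype_card (α := F),
    Nat.card_eq_fintype_card (α := Fin d), Nat.card_eq_fintype_card (α := Fin L),
    Fintype.card_fin, Fintype.card_fin, ← pow_mul, Nat.mul_comm]

lemma lcbc_natCard_range_psi {n : Type*} [Fintype n] (M : Matrix (Fin d) n F) :
    Nat.card (LinearMap.range (lcbcPsi (L := L) M)) = Fintype.card F ^ (L * M.rank) := by
  have h := lcbc_natCard_eq (lcbcPsi (L := L) M)
  have hle : M.rank ≤ d := by simpa using Matrix.rank_le_card_height M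
  have key : Nat.card (LinearMap.range (lcbcPsi (L := L) M))
        * Nat.card (LinearMap.ker (lcbcPsi (L := L) M))
      = Fintype.card F ^ (L * M.rank) * Nat.card (LinearMap.ker (lcbcPsi (L := L) M)) := by
    rw [← h, Nat.card_eq_fintype_card, lcbc_card_matrix, lcbc_natCard_ker_psi,
      ← pow_add, ← Nat.mul_add, Nat.add_sub_cancel' hle, Nat.mul_comm]
  exact Nat.eq_of_mul_eq_mul_right Nat.card_pos key

lemma lcbc_card_le_natCard {β : Type*} [Finite β] (s : Finset β) (T : Set β)
    (h : ∀ b ∈ s, b ∈ T) :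
    s.card ≤ Nat.card T := by
  rw [Nat.card_coe_set_eq, ← Set.ncard_coe_finset s]
  exact Set.ncard_le_ncard h (Set.toFinite T)

lemma lcbc_card_fiber_le {M N : Type*} [AddCommGroup M] [Module F M] [AddCommGroup N]
    [Module F N] [Fintype M] [DecidableEq M] [DecidableEq N] (f : M →ₗ[F] N) (t : N) :
    (Finset.univ.filter fun X => f X = t).card ≤ Nat.card (LinearMap.ker f) := by
  refine le_trans (lcbc_card_le_natCard _ {X | f X = t} ?_) ?_
  · intro b hb
    simpa using (Finset.mem_filter.mp hb).2
  · rcases Set.eq_empty_or_nonempty {X | f X = t} with he | ⟨X₀, hX₀⟩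
    · rw [he]; simp
    · have hX₀' : f X₀ = t := hX₀
      refine Nat.card_le_card_of_injective
        (fun c => ⟨c.1 - X₀, by simp [LinearMap.mem_ker, map_sub, c.2.out, hX₀']⟩) ?_
      intro a b hab
      have := congrArg Subtype.val hab
      exact Subtype.ext (by simpa using this)

lemma lcbc_rank_le_fromColumns {na nb : Type*} [Fintype na] [Fintype nb] (A : Matrix (Fin d) na F)
    (B : Matrix (Fin d) nb F) :
    A.rank ≤ (Matrix.fromCols A B).rank := by
  unfold Matrix.rank
  apply Submodule.finrank_mono
  rintro y ⟨x, rfl⟩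
  exact ⟨Sum.elim x 0, by simp [Matrix.mulVecLin_apply, Matrix.fromCols_mulVec_sumElim]⟩

lemma lcbc_psi_fromColumns_zero {na nb : Type*} [Fintype na] [Fintype nb] (A : Matrix (Fin d) na F)
    (B : Matrix (Fin d) nb F) (X : Matrix (Fin d) (Fin L) F) :
    Xᵀ * Matrix.fromCols A B = 0 ↔ Xᵀ * A = 0 ∧ Xᵀ * B = 0 := by
  rw [Matrix.mul_fromCols]
  constructor
  · intro h
    constructor
    · ext i j; simpa using congrFun (congrFun h i) (Sum.inl j)
    · ext i j; simpa using congrFun (congrFun h i) (Sum.inr j)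
  · rintro ⟨h1, h2⟩
    rw [h1, h2, Matrix.fromCols_zero]

lemma lcbc_natCard_compat {na nb : Type*} [Fintype na] [Fintype nb] (A : Matrix (Fin d) na F)
    (B : Matrix (Fin d) nb F) (b : Matrix (Fin L) na F) :
    Nat.card {c : Matrix (Fin L) nb F |
        ∃ X : Matrix (Fin d) (Fin L) F, Xᵀ * A = b ∧ Xᵀ * B = c}
      ≤ Fintype.card F ^ (L * ((Matrix.fromCols A B).rank - A.rank)) := by
  rcases Set.eq_empty_or_nonempty {c : Matrix (Fin L) nb F |
      ∃ X : Matrix (Fin d) (Fin L) F, Xᵀ * A = b ∧ Xᵀ * B = c} with he | ⟨c₀, X₀, hA₀, hB₀⟩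
  · rw [he]; simp
  · set K := LinearMap.ker (lcbcPsi (L := L) A) with hK
    have hstep : Nat.card {c : Matrix (Fin L) nb F |
          ∃ X : Matrix (Fin d) (Fin L) F, Xᵀ * A = b ∧ Xᵀ * B = c}
        ≤ Nat.card (Submodule.map (lcbcPsi (L := L) B) K) := by
      refine Nat.card_le_card_of_injective (fun c => ⟨c.1 - c₀, ?_⟩) ?_
      · obtain ⟨X, hXA, hXB⟩ := c.2
        exact ⟨X - X₀, by simp [hK, LinearMap.mem_ker, Matrix.transpose_sub,
          Matrix.sub_mul, hXA, hA₀], by simp [Matrix.transpose_sub, Matrix.sub_mul, hXB, hB₀]⟩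
      · intro a b hab
        have := congrArg Subtype.val hab
        exact Subtype.ext (by simpa using this)
    refine le_trans hstep (le_of_eq ?_)
    set g := (lcbcPsi (L := L) B).comp K.subtype with hg
    have hrg : LinearMap.range g = Submodule.map (lcbcPsi (L := L) B) K := by
      rw [hg, LinearMap.range_comp, Submodule.range_subtype]
    have hkerg : Nat.card (LinearMap.ker g)
        = Fintype.card F ^ (L * (d - (Matrix.fromCols A B).rank)) := by
      rw [← lcbc_natCard_ker_psi (L := L) (Matrix.fromCols A B)]
      refine Nat.card_congr ⟨fun x => ⟨x.1.1, ?_⟩, fun y => ⟨⟨y.1, ?_⟩, ?_⟩, ?_, ?_⟩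
      · have h1 : (x.1.1)ᵀ * A = 0 := x.1.2
        have h2 : (x.1.1)ᵀ * B = 0 := x.2
        exact (LinearMap.mem_ker).mpr ((lcbc_psi_fromColumns_zero A B x.1.1).mpr ⟨h1, h2⟩)
      · have hy : (y.1)ᵀ * Matrix.fromCols A B = 0 := (LinearMap.mem_ker).mp y.2
        exact (LinearMap.mem_ker (f := lcbcPsi (L := L) A)).mpr
          ((lcbc_psi_fromColumns_zero A B y.1).mp hy).1
      · have hy : (y.1)ᵀ * Matrix.fromCols A B = 0 := (LinearMap.mem_ker).mp y.2
        exact (LinearMap.mem_ker).mpr ((lcbc_psi_fromColumns_zero A B y.1).mp hy).2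
      · intro x; rfl
      · intro y; rfl
    have hKcard : Nat.card K = Fintype.card F ^ (L * (d - A.rank)) :=
      lcbc_natCard_ker_psi (L := L) A
    have h := lcbc_natCard_eq g
    rw [hKcard, hkerg, hrg] at h
    have hle1 : A.rank ≤ (Matrix.fromCols A B).rank := lcbc_rank_le_fromColumns A B
    have hle2 : (Matrix.fromCols A B).rank ≤ d := by
      simpa using Matrix.rank_le_card_height (Matrix.fromCols A B)
    have harith : L * (d - A.rank)
        = L * ((Matrix.fromCols A B).rank - A.rank) + L * (d - (Matrix.fromCols A B).rank) := by
      rw [← Nat.mul_add]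
      congr 1
      omega
    rw [harith, pow_add] at h
    exact (Nat.eq_of_mul_eq_mul_right (pow_pos Fintype.card_pos _) h).symm

lemma lcbc_card_le_mul {α β : Type*} [DecidableEq β] (s : Finset α) (f : α → β) {N B : ℕ}
    (hN : (s.image f).card ≤ N)
    (hB : ∀ b ∈ s.image f, (s.filter fun x => f x = b).card ≤ B) :
    s.card ≤ N * B := by
  rw [Finset.card_eq_sum_card_image f s]
  calc ∑ b ∈ s.image f, (s.filter fun x => f x = b).card
      ≤ ∑ _b ∈ s.image f, B := Finset.sum_le_sum hB
    _ = (s.image f).card * B := by rw [Finset.sum_const, smul_eq_mul]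
    _ ≤ N * B := Nat.mul_le_mul_right B hN

end LcbcAux

lemma lcbc_hent_ge {Ω 𝒮 : Type*} [Fintype Ω] [Nonempty Ω] [Fintype 𝒮] [DecidableEq 𝒮]
    (Φ : Ω → 𝒮) (M : ℕ) (hM : 0 < M)
    (hfib : ∀ s : 𝒮, (Finset.univ.filter fun ω => Φ ω = s).card ≤ M) :
    Real.log (Fintype.card Ω) - Real.log M
      ≤ Hent (fun _ => ((Fintype.card Ω : ℝ))⁻¹) Φ := by
  set N := Fintype.card Ω with hNdef
  have hN0 : 0 < N := Fintype.card_pos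
  have hN0' : (0 : ℝ) < N := by exact_mod_cast hN0
  have hM0' : (0 : ℝ) < M := by exact_mod_cast hM
  have hpOf : ∀ s : 𝒮, pOf (fun _ => ((N : ℝ))⁻¹) Φ s
      = ((Finset.univ.filter fun ω => Φ ω = s).card : ℝ) / N := by
    intro s
    rw [pOf, Finset.sum_const, nsmul_eq_mul, div_eq_mul_inv]
  have hsum : ∑ s : 𝒮, ((Finset.univ.filter fun ω => Φ ω = s).card : ℝ) = (N : ℝ) := by
    rw [← Nat.cast_sum]
    norm_cast
    exact (Finset.card_eq_sum_card_fiberwise (fun x _ => Finset.mem_univ (Φ x))).symm.trans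
      Finset.card_univ ▸ rfl
  have hterm : ∀ s : 𝒮,
      ((Finset.univ.filter fun ω => Φ ω = s).card : ℝ) / N * (Real.log N - Real.log M)
        ≤ Real.negMulLog (pOf (fun _ => ((N : ℝ))⁻¹) Φ s) := by
    intro s
    rw [hpOf s]
    set n := (Finset.univ.filter fun ω => Φ ω = s).card with hn
    rcases Nat.eq_zero_or_pos n with h0 | hpos
    · simp [h0, Real.negMulLog_zero]
    · have hn0' : (0 : ℝ) < n := by exact_mod_cast hpos
      rw [Real.negMulLog, Real.log_div (ne_of_gt hn0') (ne_of_gt hN0')]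
      have hrw : (-(((n : ℝ)) / N)) * (Real.log n - Real.log N)
          = (n : ℝ) / N * (Real.log N - Real.log n) := by ring
      rw [hrw]
      apply mul_le_mul_of_nonneg_left _ (by positivity)
      have hlog : Real.log n ≤ Real.log M :=
        Real.log_le_log hn0' (by exact_mod_cast hfib s)
      linarith
  calc Real.log N - Real.log M
      = (∑ s : 𝒮, ((Finset.univ.filter fun ω => Φ ω = s).card : ℝ) / N)
          * (Real.log N - Real.log M) := by
        rw [← Finset.sum_div, hsum, div_self (ne_of_gt hN0'), one_mul]
    _ = ∑ s : 𝒮, ((Finset.univ.filter fun ω => Φ ω = s).card : ℝ) / N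
          * (Real.log N - Real.log M) := by rw [Finset.sum_mul]
    _ ≤ ∑ s : 𝒮, Real.negMulLog (pOf (fun _ => ((N : ℝ))⁻¹) Φ s) :=
        Finset.sum_le_sum fun s _ => hterm s
    _ = Hent (fun _ => ((N : ℝ))⁻¹) Φ := rfl

/-- Entropic converse bound `Δ* ≥ Δ₁^{123}` for the 3-user LCBC.
Data `X ∈ F_q^{d×L}` is uniform (i.i.d. uniform entries); User `k` has side
information `XᵀV_k'` and must recover `XᵀU_k` (its whole signal space, with
`V_k' ⊆ U_k` at the level of column spans) from the broadcast `S = Φ(X)` and its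
side information. Then `H(S)/L ≥ (rk U₁ − rk V₁') + (rk[U₁,U₂] − rk[U₁,V₂'])
+ (rk[U₁,U₂,U₃] − rk[U₁,U₂,V₃'])` in q-ary units. -/
theorem lcbc_converse_delta_one
    {F : Type*} [Field F] [Fintype F] [DecidableEq F]
    {d L m₁' m₂' m₃' n₁ n₂ n₃ : ℕ} (hL : 0 < L)
    (V₁' : Matrix (Fin d) (Fin m₁') F)
    (V₂' : Matrix (Fin d) (Fin m₂') F)
    (V₃' : Matrix (Fin d) (Fin m₃') F)
    (U₁ : Matrix (Fin d) (Fin n₁) F)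
    (U₂ : Matrix (Fin d) (Fin n₂) F)
    (U₃ : Matrix (Fin d) (Fin n₃) F)
    (hsub₁ : LinearMap.range V₁'.mulVecLin ≤ LinearMap.range U₁.mulVecLin)
    (hsub₂ : LinearMap.range V₂'.mulVecLin ≤ LinearMap.range U₂.mulVecLin)
    (hsub₃ : LinearMap.range V₃'.mulVecLin ≤ LinearMap.range U₃.mulVecLin)
    (𝒮 : Type*) [Fintype 𝒮] [DecidableEq 𝒮]
    (Φ : Matrix (Fin d) (Fin L) F → 𝒮)
    (Ψ₁ : 𝒮 → Matrix (Fin L) (Fin m₁') F → Matrix (Fin L) (Fin n₁) F)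
    (Ψ₂ : 𝒮 → Matrix (Fin L) (Fin m₂') F → Matrix (Fin L) (Fin n₂) F)
    (Ψ₃ : 𝒮 → Matrix (Fin L) (Fin m₃') F → Matrix (Fin L) (Fin n₃) F)
    (hdec₁ : ∀ X : Matrix (Fin d) (Fin L) F, Ψ₁ (Φ X) (Xᵀ * V₁') = Xᵀ * U₁)
    (hdec₂ : ∀ X : Matrix (Fin d) (Fin L) F, Ψ₂ (Φ X) (Xᵀ * V₂') = Xᵀ * U₂)
    (hdec₃ : ∀ X : Matrix (Fin d) (Fin L) F, Ψ₃ (Φ X) (Xᵀ * V₃') = Xᵀ * U₃) :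
    ((U₁.rank : ℝ) - (V₁'.rank : ℝ))
      + (((Matrix.fromCols U₁ U₂).rank : ℝ)
          - ((Matrix.fromCols U₁ V₂').rank : ℝ))
      + (((Matrix.fromCols (Matrix.fromCols U₁ U₂) U₃).rank : ℝ)
          - ((Matrix.fromCols (Matrix.fromCols U₁ U₂) V₃').rank : ℝ))
    ≤ Hent (fun _ : Matrix (Fin d) (Fin L) F =>
          ((Fintype.card (Matrix (Fin d) (Fin L) F) : ℝ))⁻¹) Φ
        / Real.log (Fintype.card F) / (L : ℝ) := by
  classical
  have hne : Nonempty (Matrix (Fin d) (Fin L) F) := ⟨0⟩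
  have hr1v2 : U₁.rank ≤ (Matrix.fromCols U₁ V₂').rank := lcbc_rank_le_fromColumns U₁ V₂'
  have hr2v3 : (Matrix.fromCols U₁ U₂).rank
      ≤ (Matrix.fromCols (Matrix.fromCols U₁ U₂) V₃').rank :=
    lcbc_rank_le_fromColumns _ _
  have hr3d : (Matrix.fromCols (Matrix.fromCols U₁ U₂) U₃).rank ≤ d := by
    simpa using Matrix.rank_le_card_height (Matrix.fromCols (Matrix.fromCols U₁ U₂) U₃)
  have hfib : ∀ s : 𝒮, (Finset.univ.filter fun X => Φ X = s).card
      ≤ Fintype.card F ^ (L * V₁'.rank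
          + (L * ((Matrix.fromCols U₁ V₂').rank - U₁.rank)
          + (L * ((Matrix.fromCols (Matrix.fromCols U₁ U₂) V₃').rank
                - (Matrix.fromCols U₁ U₂).rank)
          + L * (d - (Matrix.fromCols (Matrix.fromCols U₁ U₂) U₃).rank)))) := by
    intro s
    rw [pow_add, pow_add, pow_add]
    refine lcbc_card_le_mul _ (fun X => Xᵀ * V₁') ?_ ?_
    · refine le_trans (lcbc_card_le_natCard _
        (Set.range (fun X : Matrix (Fin d) (Fin L) F => Xᵀ * V₁')) ?_) (le_of_eq ?_)
      · intro b hb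
        obtain ⟨X, -, rfl⟩ := Finset.mem_image.mp hb
        exact ⟨X, rfl⟩
      · rw [Nat.card_congr (Equiv.subtypeEquivRight (q := fun x =>
          x ∈ LinearMap.range (lcbcPsi (L := L) V₁')) (fun x => by
            simp [LinearMap.mem_range, Set.mem_range]))]
        exact lcbc_natCard_range_psi V₁'
    · intro a₁ ha₁
      refine lcbc_card_le_mul _ (fun X => Xᵀ * V₂') ?_ ?_
      · refine le_trans (lcbc_card_le_natCard _
          {c : Matrix (Fin L) (Fin m₂') F | ∃ X : Matrix (Fin d) (Fin L) F,
            Xᵀ * U₁ = Ψ₁ s a₁ ∧ Xᵀ * V₂' = c} ?_)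
          (lcbc_natCard_compat U₁ V₂' (Ψ₁ s a₁))
        intro b hb
        obtain ⟨X, hX, rfl⟩ := Finset.mem_image.mp hb
        obtain ⟨hX1, hXa⟩ := Finset.mem_filter.mp hX
        obtain ⟨-, hXs⟩ := Finset.mem_filter.mp hX1
        have hXa' : Xᵀ * V₁' = a₁ := hXa
        exact ⟨X, by rw [← hdec₁ X, hXs, hXa'], rfl⟩
      · intro a₂ ha₂
        refine lcbc_card_le_mul _ (fun X => Xᵀ * V₃') ?_ ?_
        · refine le_trans (lcbc_card_le_natCard _
            {c : Matrix (Fin L) (Fin m₃') F | ∃ X : Matrix (Fin d) (Fin L) F,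
              Xᵀ * (Matrix.fromCols U₁ U₂)
                = Matrix.fromCols (Ψ₁ s a₁) (Ψ₂ s a₂) ∧ Xᵀ * V₃' = c} ?_)
            (lcbc_natCard_compat (Matrix.fromCols U₁ U₂) V₃' _)
          intro b hb
          obtain ⟨X, hX, rfl⟩ := Finset.mem_image.mp hb
          obtain ⟨hX2, hXa₂⟩ := Finset.mem_filter.mp hX
          obtain ⟨hX1, hXa₁⟩ := Finset.mem_filter.mp hX2
          obtain ⟨-, hXs⟩ := Finset.mem_filter.mp hX1
          have hXa₁' : Xᵀ * V₁' = a₁ := hXa₁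
          have hXa₂' : Xᵀ * V₂' = a₂ := hXa₂
          refine ⟨X, ?_, rfl⟩
          rw [Matrix.mul_fromCols, ← hdec₁ X, ← hdec₂ X, hXs, hXa₁', hXa₂']
        · intro a₃ ha₃
          refine le_trans (Finset.card_le_card ?_)
            (le_trans (lcbc_card_fiber_le
              (lcbcPsi (L := L) (Matrix.fromCols (Matrix.fromCols U₁ U₂) U₃))
              (Matrix.fromCols (Matrix.fromCols (Ψ₁ s a₁) (Ψ₂ s a₂)) (Ψ₃ s a₃)))
              (le_of_eq (lcbc_natCard_ker_psi _)))
          intro X hX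
          obtain ⟨hX3, hXa₃⟩ := Finset.mem_filter.mp hX
          obtain ⟨hX2, hXa₂⟩ := Finset.mem_filter.mp hX3
          obtain ⟨hX1, hXa₁⟩ := Finset.mem_filter.mp hX2
          obtain ⟨-, hXs⟩ := Finset.mem_filter.mp hX1
          have hXa₁' : Xᵀ * V₁' = a₁ := hXa₁
          have hXa₂' : Xᵀ * V₂' = a₂ := hXa₂
          have hXa₃' : Xᵀ * V₃' = a₃ := hXa₃
          refine Finset.mem_filter.mpr ⟨Finset.mem_univ X, ?_⟩
          show Xᵀ * (Matrix.fromCols (Matrix.fromCols U₁ U₂) U₃) = _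
          rw [Matrix.mul_fromCols, Matrix.mul_fromCols,
            ← hdec₁ X, ← hdec₂ X, ← hdec₃ X, hXs, hXa₁', hXa₂', hXa₃']
  have key := lcbc_hent_ge Φ _ (pow_pos Fintype.card_pos _) hfib
  have hq1 : (1 : ℝ) < (Fintype.card F : ℝ) := by exact_mod_cast Fintype.one_lt_card
  have hlogq : 0 < Real.log (Fintype.card F) := Real.log_pos hq1
  have hL' : (0 : ℝ) < L := by exact_mod_cast hL
  rw [div_div, le_div_iff₀ (mul_pos hlogq hL')]
  have hbound : (((U₁.rank : ℝ) - (V₁'.rank : ℝ))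
      + (((Matrix.fromCols U₁ U₂).rank : ℝ)
          - ((Matrix.fromCols U₁ V₂').rank : ℝ))
      + (((Matrix.fromCols (Matrix.fromCols U₁ U₂) U₃).rank : ℝ)
          - ((Matrix.fromCols (Matrix.fromCols U₁ U₂) V₃').rank : ℝ)))
        * (Real.log (Fintype.card F) * L)
      = Real.log (Fintype.card (Matrix (Fin d) (Fin L) F))
        - Real.log ((Fintype.card F : ℝ) ^ (L * V₁'.rank
          + (L * ((Matrix.fromCols U₁ V₂').rank - U₁.rank)
          + (L * ((Matrix.fromCols (Matrix.fromCols U₁ U₂) V₃').rank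
                - (Matrix.fromCols U₁ U₂).rank)
          + L * (d - (Matrix.fromCols (Matrix.fromCols U₁ U₂) U₃).rank))))) := by
    rw [lcbc_card_matrix (F := F) (d := d) (L := L), Nat.cast_pow, Real.log_pow, Real.log_pow]
    push_cast [Nat.cast_sub hr1v2, Nat.cast_sub hr2v3, Nat.cast_sub hr3d]
    ring
  rw [hbound]
  calc _ ≤ Hent (fun _ : Matrix (Fin d) (Fin L) F =>
        ((Fintype.card (Matrix (Fin d) (Fin L) F) : ℝ))⁻¹) Φ := by
        refine le_trans (le_of_eq ?_) key
        push_cast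
        ring
    _ = _ := rfl
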